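/- Bind respects equivalence up to Tau: for any event signature E, types A and R, if t ≡ u in itree E A and k, k' : A → itree E R satisfy k a ≡ k' a for every a : A, then (a <- t ;; k a) ≡ (a <- u ;; k' a). In particular, itree E is a monad modulo equivalence up to Tau. -/

import Mathlib

/-! ## Interaction trees -/

/-- Node shapes of an interaction tree over event signature `E` with result type `R`. -/
inductive ITreeShape (E : Type → Type) (R : Type) : Type 1
  | ret (r : R) : ITreeShape E R
  | tau : ITreeShape E R
  | vis (X : Type) (e : E X) : ITreeShape E R

/-- The polynomial functor whose final coalgebra is the type of interaction trees. -/
def ITreeF (E : Type → Type) (R : Type) : PFunctor.{1, 1} :=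
  ⟨ITreeShape E R, fun s =>
    match s with
    | .ret _ => PEmpty
    | .tau => PUnit
    | .vis X _ => ULift X⟩

/-- Interaction trees: the coinductive type with constructors `Ret`, `Tau` and `Vis`,
realized as the M-type (final coalgebra) of `ITreeF E R`. -/
def ITree (E : Type → Type) (R : Type) : Type 1 :=
  (ITreeF E R).M

namespace ITree

variable {E : Type → Type} {A B R S : Type}

/-- `Ret r`: the computation that halts returning `r`. -/
def ret (r : R) : ITree E R :=
  PFunctor.M.mk ⟨ITreeShape.ret r, fun x => PEmpty.elim x⟩

/-- `Tau t`: a silent internal step followed by `t`. -/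
def tau (t : ITree E R) : ITree E R :=
  PFunctor.M.mk ⟨ITreeShape.tau, fun _ => t⟩

/-- `Vis e k`: a visible event `e` awaiting an answer `x : X`, continuing as `k x`. -/
def vis {X : Type} (e : E X) (k : X → ITree E R) : ITree E R :=
  PFunctor.M.mk ⟨ITreeShape.vis X e, fun x => k x.down⟩

/-- Monadic bind: corecursively grafts `k r` at each leaf `Ret r`. -/
def bind (t : ITree E A) (k : A → ITree E R) : ITree E R :=
  PFunctor.M.corec
    (fun s =>
      match s with
      | Sum.inl t' =>
        match PFunctor.M.dest t' with
        | ⟨ITreeShape.ret a, _⟩ =>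
          match PFunctor.M.dest (k a) with
          | ⟨sh, ch⟩ => ⟨sh, fun b => Sum.inr (ch b)⟩
        | ⟨ITreeShape.tau, ch⟩ => ⟨ITreeShape.tau, fun b => Sum.inl (ch b)⟩
        | ⟨ITreeShape.vis X e, ch⟩ => ⟨ITreeShape.vis X e, fun b => Sum.inl (ch b)⟩
      | Sum.inr u =>
        match PFunctor.M.dest u with
        | ⟨sh, ch⟩ => ⟨sh, fun b => Sum.inr (ch b)⟩)
    (Sum.inl t : ITree E A ⊕ ITree E R)

instance : Monad (ITree E) where
  pure := ret
  bind := bind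

/-- Perform a single event and return its answer. -/
def trigger {X : Type} (e : E X) : ITree E X :=
  vis e ret

/-- The silently diverging tree: `spin = Tau spin`. -/
def spin : ITree E R :=
  PFunctor.M.corec (fun _ : PUnit.{2} => ⟨ITreeShape.tau, fun _ => PUnit.unit⟩) PUnit.unit

/-- Iterate a body `step` forever (a `CoFixpoint` loop threading a state `s : S`). -/
def loop (step : S → ITree E S) (s₀ : S) : ITree E Unit :=
  PFunctor.M.corec
    (fun t : ITree E S =>
      match PFunctor.M.dest t with
      | ⟨ITreeShape.ret s, _⟩ => ⟨ITreeShape.tau, fun _ => step s⟩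
      | ⟨ITreeShape.tau, ch⟩ => ⟨ITreeShape.tau, fun b => ch b⟩
      | ⟨ITreeShape.vis X e, ch⟩ => ⟨ITreeShape.vis X e, fun b => ch b⟩)
    (step s₀)

/-! ## Equivalence up to Tau (weak bisimulation) -/

/-- `Untaus t u`: `u` is obtained from `t` by removing finitely many leading `Tau`
nodes, and `u` does not itself start with a `Tau`. -/
inductive Untaus : ITree E R → ITree E R → Prop
  | base {t : ITree E R} (h : ∀ t', t ≠ tau t') : Untaus t t
  | step {t u : ITree E R} (h : Untaus t u) : Untaus (tau t) u

/-- `t` converges to a non-`Tau` node after finitely many leading `Tau`s. -/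
def FiniteTaus (t : ITree E R) : Prop := ∃ t', Untaus t t'

/-- Two trees with no leading `Tau` match up to `Rel`: both are the same `Ret`,
or both are `Vis` of the same event with continuations pointwise related by `Rel`. -/
def EqHead (Rel : ITree E R → ITree E R → Prop) (t u : ITree E R) : Prop :=
  (∃ r : R, t = ret r ∧ u = ret r) ∨
  (∃ (X : Type) (e : E X) (k k' : X → ITree E R),
      t = vis e k ∧ u = vis e k' ∧ ∀ x : X, Rel (k x) (k' x))

/-- `Rel` is a weak bisimulation. -/
def IsEuttRel (Rel : ITree E R → ITree E R → Prop) : Prop :=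
  ∀ t u, Rel t u →
    (FiniteTaus t ↔ FiniteTaus u) ∧
    (∀ t' u', Untaus t t' → Untaus u u' → EqHead Rel t' u')

/-- Equivalence up to `Tau`: the greatest weak bisimulation. -/
def Eutt (t u : ITree E R) : Prop :=
  ∃ Rel, IsEuttRel Rel ∧ Rel t u

/-! ## Traces -/

/-- An event together with the environment's answer. -/
structure EventE (E : Type → Type) : Type 1 where
  X : Type
  e : E X
  ans : X

/-- `IsTrace t tr r?` holds when `tr` lists, in order, the `Vis` events (with answers)
along a finite `Tau`-skipping path of `t`, with `r? = some r` if the path ends at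
`Ret r` and `none` otherwise. -/
inductive IsTrace : ITree E R → List (EventE E) → Option R → Prop
  | nil (t : ITree E R) : IsTrace t [] none
  | retEnd (r : R) : IsTrace (ITree.ret r) [] (some r)
  | tauStep {t : ITree E R} {tr r?} : IsTrace t tr r? → IsTrace (ITree.tau t) tr r?
  | visStep {X : Type} (e : E X) (x : X) {k : X → ITree E R} {tr r?} :
      IsTrace (k x) tr r? → IsTrace (ITree.vis e k) (⟨X, e, x⟩ :: tr) r?

/-- Trace refinement: every trace of `t` (with its optional result) is a trace of `u`. -/
def Refines (t u : ITree E R) : Prop :=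
  ∀ tr r?, IsTrace t tr r? → IsTrace u tr r?

end ITree

section Aux

namespace ITree

variable {E : Type → Type} {A R : Type}

theorem dest_ret (r : R) :
    PFunctor.M.dest (ret (E := E) r) = ⟨ITreeShape.ret r, fun x => PEmpty.elim x⟩ :=
  PFunctor.M.dest_mk _

theorem dest_tau (t : ITree E R) :
    PFunctor.M.dest (tau t) = ⟨ITreeShape.tau, fun _ => t⟩ :=
  PFunctor.M.dest_mk _

theorem dest_vis {X : Type} (e : E X) (h : X → ITree E R) :
    PFunctor.M.dest (vis e h) = ⟨ITreeShape.vis X e, fun x => h x.down⟩ :=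
  PFunctor.M.dest_mk _

theorem dest_inj {t u : ITree E R} (h : PFunctor.M.dest t = PFunctor.M.dest u) : t = u := by
  have h2 := congrArg PFunctor.M.mk h
  exact (PFunctor.M.mk_dest t).symm.trans (h2.trans (PFunctor.M.mk_dest u))

theorem ret_ne_tau (r : R) (t : ITree E R) : ret (E := E) r ≠ tau t := by
  intro h
  have h2 := congrArg (fun z => (PFunctor.M.dest z).1) h
  simp only [dest_ret, dest_tau] at h2
  cases h2

theorem vis_ne_tau {X : Type} (e : E X) (h : X → ITree E R) (t : ITree E R) :
    vis e h ≠ tau t := by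
  intro heq
  have h2 := congrArg (fun z => (PFunctor.M.dest z).1) heq
  simp only [dest_vis, dest_tau] at h2
  cases h2

theorem ret_ne_vis (r : R) {X : Type} (e : E X) (h : X → ITree E R) :
    ret (E := E) r ≠ vis e h := by
  intro heq
  have h2 := congrArg (fun z => (PFunctor.M.dest z).1) heq
  simp only [dest_ret, dest_vis] at h2
  cases h2

theorem ret_inj {r r' : R} (h : ret (E := E) r = ret r') : r = r' := by
  have h2 := congrArg (fun z => (PFunctor.M.dest z).1) h
  simp only [dest_ret] at h2
  exact ITreeShape.ret.inj h2

theorem tau_inj {t u : ITree E R} (h : tau t = tau u) : t = u := by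
  have h2 := congrArg PFunctor.M.dest h
  rw [dest_tau, dest_tau] at h2
  have h3 := (Sigma.mk.inj_iff.mp h2).2
  exact congrFun (eq_of_heq h3) PUnit.unit

theorem cases3 (t : ITree E R) :
    (∃ r : R, t = ret r) ∨ (∃ t' : ITree E R, t = tau t') ∨
      (∃ (X : Type) (e : E X) (h : X → ITree E R), t = vis e h) := by
  have hmk := (PFunctor.M.mk_dest t).symm
  rcases hdest : PFunctor.M.dest t with ⟨s, f⟩
  rw [hdest] at hmk
  cases s with
  | ret r =>
    left
    refine ⟨r, ?_⟩
    rw [hmk]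
    unfold ret
    have hf : f = fun x => PEmpty.elim x := funext fun x => PEmpty.elim x
    rw [hf]
    rfl
  | tau =>
    right; left; exact ⟨f PUnit.unit, by rw [hmk]; unfold tau; rfl⟩
  | vis X e =>
    right; right
    exact ⟨X, e, fun x => f (ULift.up x), by rw [hmk]; unfold vis; rfl⟩

/-! ### Computation rules for `bind` -/

/-- The corecursion functional used to define `bind`. -/
def bindF (k : A → ITree E R) :
    ITree E A ⊕ ITree E R → (ITreeF E R).Obj (ITree E A ⊕ ITree E R) :=
  fun s =>
    match s with
    | Sum.inl t' =>
      match PFunctor.M.dest t' with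
      | ⟨ITreeShape.ret a, _⟩ =>
        match PFunctor.M.dest (k a) with
        | ⟨sh, ch⟩ => ⟨sh, fun b => Sum.inr (ch b)⟩
      | ⟨ITreeShape.tau, ch⟩ => ⟨ITreeShape.tau, fun b => Sum.inl (ch b)⟩
      | ⟨ITreeShape.vis X e, ch⟩ => ⟨ITreeShape.vis X e, fun b => Sum.inl (ch b)⟩
    | Sum.inr u =>
      match PFunctor.M.dest u with
      | ⟨sh, ch⟩ => ⟨sh, fun b => Sum.inr (ch b)⟩

theorem bind_def (t : ITree E A) (k : A → ITree E R) :
    bind t k = PFunctor.M.corec (bindF k) (Sum.inl t) := rfl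

theorem corec_bindF_inr (k : A → ITree E R) (u : ITree E R) :
    PFunctor.M.corec (bindF k) (Sum.inr u) = u := by
  apply PFunctor.M.bisim
    (fun x y => x = PFunctor.M.corec (bindF k) (Sum.inr y)) ?_ _ _ rfl
  intro x y hxy
  subst hxy
  rcases hy : PFunctor.M.dest y with ⟨sh, ch⟩
  refine ⟨sh, fun b => PFunctor.M.corec (bindF k) (Sum.inr (ch b)), ch, ?_, rfl, fun i => rfl⟩
  rw [PFunctor.M.dest_corec]
  show PFunctor.map _ _ (bindF k (Sum.inr y)) = _
  simp only [bindF]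
  rw [hy]
  rfl

theorem bind_ret (a : A) (k : A → ITree E R) : bind (ret a) k = k a := by
  apply dest_inj
  rw [bind_def, PFunctor.M.dest_corec]
  show PFunctor.map _ _ (bindF k (Sum.inl (ret a))) = _
  simp only [bindF]
  rw [dest_ret]
  show (ITreeF E R).map (PFunctor.M.corec (bindF k))
      (match PFunctor.M.dest (k a) with
        | ⟨sh, ch⟩ => ⟨sh, fun b => Sum.inr (ch b)⟩) = PFunctor.M.dest (k a)
  rcases hk : PFunctor.M.dest (k a) with ⟨sh, ch⟩
  show (⟨sh, fun b => PFunctor.M.corec (bindF k) (Sum.inr (ch b))⟩ :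
      (ITreeF E R).Obj _) = ⟨sh, ch⟩
  have hc : (fun b => PFunctor.M.corec (bindF k) (Sum.inr (ch b))) = ch :=
    funext fun b => corec_bindF_inr k (ch b)
  rw [hc]

theorem bind_tau (t : ITree E A) (k : A → ITree E R) :
    bind (tau t) k = tau (bind t k) := by
  apply dest_inj
  rw [bind_def, PFunctor.M.dest_corec, dest_tau]
  show PFunctor.map _ _ (bindF k (Sum.inl (tau t))) = _
  simp only [bindF]
  rw [dest_tau]
  rfl

theorem bind_vis {X : Type} (e : E X) (h : X → ITree E A) (k : A → ITree E R) :
    bind (vis e h) k = vis e fun x => bind (h x) k := by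
  apply dest_inj
  rw [bind_def, PFunctor.M.dest_corec, dest_vis]
  show PFunctor.map _ _ (bindF k (Sum.inl (vis e h))) = _
  simp only [bindF]
  rw [dest_vis]
  rfl

/-! ### Untaus and bind -/

theorem untaus_bind_ret {t : ITree E A} {a : A} (h : Untaus t (ret a))
    {k : A → ITree E R} {w : ITree E R} (hw : Untaus (k a) w) :
    Untaus (bind t k) w := by
  generalize hra : ret a = ra at h
  induction h with
  | base hne => subst hra; rw [bind_ret]; exact hw
  | step h ih => rw [bind_tau]; exact Untaus.step (ih hra)

theorem untaus_bind_vis {t : ITree E A} {X : Type} {e : E X} {h : X → ITree E A}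
    (hu : Untaus t (vis e h)) (k : A → ITree E R) :
    Untaus (bind t k) (vis e fun x => bind (h x) k) := by
  generalize hv : vis e h = v at hu
  induction hu with
  | base hne =>
    subst hv
    rw [bind_vis]
    exact Untaus.base fun s => vis_ne_tau _ _ s
  | step h' ih => rw [bind_tau]; exact Untaus.step (ih hv)

theorem untaus_bind_inv {k : A → ITree E R} {x : ITree E R} {w : ITree E R}
    (h : Untaus x w) :
    ∀ t : ITree E A, x = bind t k →
      ∃ t', Untaus t t' ∧
        ((∃ a, t' = ret a ∧ Untaus (k a) w) ∨
         (∃ (X : Type) (e : E X) (h' : X → ITree E A), t' = vis e h' ∧ w = bind t' k)) := by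
  induction h with
  | @base x hne =>
    intro t hx
    rcases cases3 t with ⟨a, rfl⟩ | ⟨s, rfl⟩ | ⟨X, e, h', rfl⟩
    · refine ⟨ret a, Untaus.base fun s => ret_ne_tau _ _, Or.inl ⟨a, rfl, ?_⟩⟩
      rw [bind_ret] at hx
      subst hx
      exact Untaus.base hne
    · rw [bind_tau] at hx
      exact absurd hx (hne _)
    · exact ⟨vis e h', Untaus.base fun s => vis_ne_tau _ _ _,
        Or.inr ⟨X, e, h', rfl, hx⟩⟩
  | @step x₀ w h ih =>
    intro t hx
    rcases cases3 t with ⟨a, rfl⟩ | ⟨s, rfl⟩ | ⟨X, e, h', rfl⟩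
    · refine ⟨ret a, Untaus.base fun s => ret_ne_tau _ _, Or.inl ⟨a, rfl, ?_⟩⟩
      rw [bind_ret] at hx
      rw [← hx]
      exact Untaus.step h
    · rw [bind_tau] at hx
      have := tau_inj hx
      rcases ih s this with ⟨t', ht', hcase⟩
      exact ⟨t', Untaus.step ht', hcase⟩
    · rw [bind_vis] at hx
      exact absurd hx.symm (vis_ne_tau _ _ _)

/-! ### Basic facts about `Eutt` -/

theorem eqHead_mono {P Q : ITree E R → ITree E R → Prop}
    (hPQ : ∀ a b, P a b → Q a b) {t u : ITree E R} (h : EqHead P t u) :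
    EqHead Q t u := by
  rcases h with ⟨r, ht, hu⟩ | ⟨X, e, k, k', ht, hu, hrel⟩
  · exact Or.inl ⟨r, ht, hu⟩
  · exact Or.inr ⟨X, e, k, k', ht, hu, fun x => hPQ _ _ (hrel x)⟩

theorem le_eutt {Rel : ITree E R → ITree E R → Prop} (hR : IsEuttRel Rel) :
    ∀ a b, Rel a b → Eutt a b :=
  fun a b h => ⟨Rel, hR, h⟩

theorem eutt_isEuttRel : IsEuttRel (Eutt (E := E) (R := R)) := by
  intro t u h
  rcases h with ⟨Rel, hRel, htu⟩
  rcases hRel t u htu with ⟨hfin, hheads⟩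
  exact ⟨hfin, fun t' u' h1 h2 =>
    eqHead_mono (le_eutt hRel) (hheads t' u' h1 h2)⟩

theorem Eutt.symm' {t u : ITree E R} (h : Eutt t u) : Eutt u t := by
  rcases h with ⟨Rel, hRel, htu⟩
  refine ⟨fun a b => Rel b a, ?_, htu⟩
  intro a b hab
  rcases hRel b a hab with ⟨hfin, hheads⟩
  refine ⟨hfin.symm, fun a' b' h1 h2 => ?_⟩
  rcases hheads b' a' h2 h1 with ⟨r, hb, ha⟩ | ⟨X, e, kk, kk', hb, ha, hrel⟩
  · exact Or.inl ⟨r, ha, hb⟩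
  · exact Or.inr ⟨X, e, kk', kk, ha, hb, fun x => hrel x⟩

/-- One direction of `FiniteTaus` transport across `bind`. -/
theorem finiteTaus_bind_mp {k k' : A → ITree E R}
    (hk : ∀ a, Eutt (k a) (k' a)) {t u : ITree E A} (ht : Eutt t u) :
    FiniteTaus (bind t k) → FiniteTaus (bind u k') := by
  rintro ⟨w, hw⟩
  rcases untaus_bind_inv hw t rfl with ⟨t', ht', hcase⟩
  rcases eutt_isEuttRel t u ht with ⟨hfin, hheads⟩
  have hfu : FiniteTaus u := hfin.mp ⟨t', ht'⟩
  rcases hfu with ⟨u', hu'⟩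
  have hhead := hheads t' u' ht' hu'
  rcases hcase with ⟨a, rfl, hka⟩ | ⟨X, e, h', rfl, rfl⟩
  · -- t' = ret a; then u' = ret a as well
    rcases hhead with ⟨r, har, hur⟩ | ⟨X, e, kk, kk', har, _, _⟩
    · have : a = r := ret_inj har
      subst this
      -- k a has finite taus, hence so does k' a
      rcases eutt_isEuttRel _ _ (hk a) with ⟨hfinK, _⟩
      rcases hfinK.mp ⟨w, hka⟩ with ⟨w', hw'⟩
      exact ⟨w', untaus_bind_ret (hur ▸ hu') hw'⟩
    · exact absurd har (ret_ne_vis _ _ _)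
  · -- t' = vis e h'
    rcases hhead with ⟨r, har, hur⟩ | ⟨X₂, e₂, kk, kk', har, hur, _⟩
    · exact absurd har.symm (ret_ne_vis _ _ _)
    · exact ⟨_, untaus_bind_vis (hur ▸ hu') k'⟩

end ITree

end Aux

/-- Bind respects equivalence up to `Tau`: if `t ≡ u` and
`k a ≡ k' a` for every `a`, then `(a <- t ;; k a) ≡ (a <- u ;; k' a)`. -/
theorem bind_congr_eutt (E : Type → Type) (A R : Type) (t u : ITree E A)
    (k k' : A → ITree E R) (ht : ITree.Eutt t u)
    (hk : ∀ a : A, ITree.Eutt (k a) (k' a)) :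
    ITree.Eutt (ITree.bind t k) (ITree.bind u k') := by
  refine ⟨fun x y =>
      (∃ t₀ u₀, ITree.Eutt t₀ u₀ ∧ x = ITree.bind t₀ k ∧ y = ITree.bind u₀ k') ∨
        ITree.Eutt x y, ?_, Or.inl ⟨t, u, ht, rfl, rfl⟩⟩
  intro x y hxy
  rcases hxy with ⟨t₀, u₀, htu, rfl, rfl⟩ | hxy
  · refine ⟨⟨fun h => ITree.finiteTaus_bind_mp hk htu h,
      fun h => ITree.finiteTaus_bind_mp (fun a => (hk a).symm') htu.symm' h⟩, ?_⟩
    intro t₁ u₁ h1 h2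
    rcases ITree.untaus_bind_inv h1 t₀ rfl with ⟨t', ht', hcaseT⟩
    rcases ITree.untaus_bind_inv h2 u₀ rfl with ⟨u', hu', hcaseU⟩
    have hhead := (ITree.eutt_isEuttRel t₀ u₀ htu).2 t' u' ht' hu'
    rcases hhead with ⟨r, htr, hur⟩ | ⟨X, e, kk, kk', htv, huv, hrel⟩
    · -- both sides converge to `ret r`
      rcases hcaseT with ⟨a, hta, hka⟩ | ⟨X₂, e₂, h₂, htv₂, _⟩
      · rcases hcaseU with ⟨a', hua, hka'⟩ | ⟨X₃, e₃, h₃, huv₃, _⟩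
        · rw [htr] at hta
          rw [hur] at hua
          have ha : r = a := ITree.ret_inj hta
          have ha' : r = a' := ITree.ret_inj hua
          subst ha; subst ha'
          rcases hk r with ⟨Rel₁, hRel₁, h₁⟩
          have hEq := (hRel₁ _ _ h₁).2 t₁ u₁ hka hka'
          exact ITree.eqHead_mono
            (fun a b hab => Or.inr (ITree.le_eutt hRel₁ a b hab)) hEq
        · rw [hur] at huv₃
          exact absurd huv₃ (ITree.ret_ne_vis _ _ _)
      · rw [htr] at htv₂
        exact absurd htv₂ (ITree.ret_ne_vis _ _ _)
    · -- both sides converge to a `vis` node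
      rcases hcaseT with ⟨a, hta, _⟩ | ⟨X₂, e₂, h₂, _, hbt⟩
      · rw [htv] at hta
        exact absurd hta.symm (ITree.ret_ne_vis _ _ _)
      rcases hcaseU with ⟨a', hua, _⟩ | ⟨X₃, e₃, h₃, _, hbu⟩
      · rw [huv] at hua
        exact absurd hua.symm (ITree.ret_ne_vis _ _ _)
      rw [htv, ITree.bind_vis] at hbt
      rw [huv, ITree.bind_vis] at hbu
      exact Or.inr ⟨X, e, fun x => ITree.bind (kk x) k,
        fun x => ITree.bind (kk' x) k', hbt, hbu,
        fun x => Or.inl ⟨kk x, kk' x, hrel x, rfl, rfl⟩⟩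
  · rcases ITree.eutt_isEuttRel x y hxy with ⟨hfin, hheads⟩
    exact ⟨hfin, fun a b h1 h2 =>
      ITree.eqHead_mono (fun p q h => Or.inr h) (hheads a b h1 h2)⟩
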